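/- A maniplex is isomorphic to the flag graph of an abstract polytope if and only if it satisfies the path intersection property (equivalently, the weak path intersection property). -/

import Mathlib

/-- An `n`-maniplex on vertex (flag) set `V`: a nonempty, connected, properly
`n`-edge-coloured simple `n`-regular graph (encoded by the fixed-point-free
involutions `σ i` giving the unique `i`-neighbour of each vertex) such that the
2-factors of colours `i`, `j` with `|i - j| > 1` are 4-cycles. -/
structure Maniplex (n : ℕ) (V : Type) where
  nonempty : Nonempty V
  σ : Fin n → V → V
  invol : ∀ i v, σ i (σ i v) = v
  nofix : ∀ i v, σ i v ≠ v
  conn : ∀ u v : V, Relation.ReflTransGen (fun x y => ∃ i, σ i x = y) u v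
  comm : ∀ i j : Fin n, (i : ℕ) + 1 < (j : ℕ) → ∀ v,
    σ i (σ j v) = σ j (σ i v) ∧ σ i v ≠ σ j v

namespace Maniplex

variable {n : ℕ} {V : Type}

/-- There is a path from `u` to `v` using only edges with colours in `A`. -/
def ReachIn (M : Maniplex n V) (A : Set (Fin n)) (u v : V) : Prop :=
  Relation.ReflTransGen (fun x y => ∃ i ∈ A, M.σ i x = y) u v

/-- The `i`-face of `M` containing `v`: the connected component of `v` in the
spanning subgraph with all edges of colour `i` deleted. -/
def face (M : Maniplex n V) (i : Fin n) (v : V) : Set V :=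
  {u | M.ReachIn {j | j ≠ i} v u}

/-- `S` is an `i`-face of `M`. -/
def IsFace (M : Maniplex n V) (i : Fin n) (S : Set V) : Prop :=
  ∃ v, S = M.face i v

end Maniplex
namespace Maniplex

variable {n : ℕ} {V : Type}

/-- The type of (proper) faces of a maniplex: a rank together with a face of that rank. -/
def FaceT (M : Maniplex n V) : Type := {F : Fin n × Set V // M.IsFace F.1 F.2}

/-- The order on faces: `F ≤ G` iff `rank F ≤ rank G` and `F ∩ G ≠ ∅`. -/
def faceLe (M : Maniplex n V) (F G : M.FaceT) : Prop :=
  F.1.1 ≤ G.1.1 ∧ (F.1.2 ∩ G.1.2).Nonempty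

/-- The faces of `M` together with adjoined minimum `none` and maximum `some none`. -/
def PFace (M : Maniplex n V) : Type := Option (Option M.FaceT)

/-- The order on `P_M` (with the improper minimum and maximum adjoined). -/
def ple (M : Maniplex n V) : M.PFace → M.PFace → Prop
  | none, _ => True
  | _, some none => True
  | some (some F), some (some G) => M.faceLe F G
  | _, _ => False

/-- The rank function of `P_M`. -/
def prank (M : Maniplex n V) : M.PFace → ℤ
  | none => -1
  | some none => (n : ℤ)
  | some (some F) => ((F.1.1 : ℕ) : ℤ)

/-- The component intersection property: for every chain of faces, the
intersection of the faces is a connected subgraph of `M`. -/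
def CIP (M : Maniplex n V) : Prop :=
  ∀ (k : ℕ) (r : Fin k → Fin n) (S : Fin k → Set V),
    (∀ a, M.IsFace (r a) (S a)) →
    (∀ a b, (S a ∩ S b).Nonempty) →
    ∀ u v : V, (∀ a, u ∈ S a) → (∀ a, v ∈ S a) →
      M.ReachIn {c | ∀ a, c ≠ r a} u v

/-- The diamond condition for the poset `P_M`. -/
def Diamond (M : Maniplex n V) : Prop :=
  ∀ (i : Fin n) (E F : M.PFace), M.ple E F →
    M.prank E = ((i : ℕ) : ℤ) - 1 → M.prank F = ((i : ℕ) : ℤ) + 1 →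
    ∃ H₁ H₂ : M.PFace, H₁ ≠ H₂ ∧
      ∀ H : M.PFace,
        (M.prank H = ((i : ℕ) : ℤ) ∧ M.ple E H ∧ M.ple H F) ↔ (H = H₁ ∨ H = H₂)

/-- A maximal chain of proper faces of `P_M`: one face of each rank,
pairwise incident. -/
def IsFlag (M : Maniplex n V) (S : Fin n → Set V) : Prop :=
  (∀ i, M.IsFace i (S i)) ∧ ∀ i j, ((S i) ∩ (S j)).Nonempty

/-- `P_M` is faithful: every maximal chain of proper faces has a unique common vertex. -/
def Faithful (M : Maniplex n V) : Prop :=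
  ∀ S : Fin n → Set V, M.IsFlag S → ∃! v : V, ∀ i, v ∈ S i

/-- Strong flag connectivity of `P_M`: any two maximal chains `Φ`, `Ψ` are joined
by a sequence of successively adjacent maximal chains all containing `Φ ∩ Ψ`. -/
def SFC (M : Maniplex n V) : Prop :=
  ∀ Φ Ψ : Fin n → Set V, M.IsFlag Φ → M.IsFlag Ψ →
    Relation.ReflTransGen
      (fun X Y => M.IsFlag Y ∧ (∃ j, X j ≠ Y j ∧ ∀ l, l ≠ j → X l = Y l) ∧
        ∀ i, Φ i = Ψ i → Y i = Φ i) Φ Ψ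

/-- The strong path intersection property. -/
def SPIP (M : Maniplex n V) : Prop :=
  ∀ (A B : Set (Fin n)) (u v : V),
    M.ReachIn A u v → M.ReachIn B u v → M.ReachIn (A ∩ B) u v

/-- The weak path intersection property. -/
def WPIP (M : Maniplex n V) : Prop :=
  ∀ i j : Fin n, i < j → ∀ u v : V,
    M.ReachIn {c | i < c} u v → M.ReachIn {c | c < j} u v →
    M.ReachIn {c | i < c ∧ c < j} u v

end Maniplex
/-- `f` is a maximal chain ("flag") of a ranked poset with rank function `rk`,
listing one element of each rank `-1, 0, ..., n`. -/
def IsRankedChain (n : ℕ) {P : Type} [Preorder P] (rk : P → ℤ)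
    (f : Fin (n + 2) → P) : Prop :=
  StrictMono f ∧ ∀ m : Fin (n + 2), rk (f m) = ((m : ℕ) : ℤ) - 1

/-- An abstract `n`-polytope structure on a partially ordered set `P`. -/
structure APolytope (n : ℕ) (P : Type) [PartialOrder P] where
  rk : P → ℤ
  bot : P
  top : P
  bot_le : ∀ x, bot ≤ x
  le_top : ∀ x, x ≤ top
  rk_bot : rk bot = -1
  rk_top : rk top = (n : ℤ)
  rk_strictMono : ∀ x y : P, x < y → rk x < rk y
  chain_full : ∀ C : Set P, IsMaxChain (· ≤ ·) C →
    ∀ m : ℤ, -1 ≤ m → m ≤ (n : ℤ) → ∃! x, x ∈ C ∧ rk x = m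
  diamond : ∀ x z : P, x ≤ z → rk z = rk x + 2 →
    ∃ y₁ y₂ : P, y₁ ≠ y₂ ∧
      ∀ y : P, (x ≤ y ∧ y ≤ z ∧ rk y = rk x + 1) ↔ (y = y₁ ∨ y = y₂)
  sfc : ∀ Φ Ψ : Fin (n + 2) → P, IsRankedChain n rk Φ → IsRankedChain n rk Ψ →
    Relation.ReflTransGen
      (fun X Y => IsRankedChain n rk Y ∧
        (∃ j, X j ≠ Y j ∧ ∀ l, l ≠ j → X l = Y l) ∧
        ∀ m, Φ m = Ψ m → Y m = Φ m) Φ Ψ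

namespace APolytope

variable {n : ℕ} {P : Type} [PartialOrder P]

/-- The flags of the polytope: maximal chains, with one element of each rank. -/
def Flag (AP : APolytope n P) : Type :=
  {f : Fin (n + 2) → P // IsRankedChain n AP.rk f}

/-- Two flags are `i`-adjacent (joined by an edge of colour `i` in the flag
graph) iff they differ exactly in their face of rank `i`. -/
def FlagAdj (AP : APolytope n P) (i : Fin n) (X Y : AP.Flag) : Prop :=
  X.1 i.succ.castSucc ≠ Y.1 i.succ.castSucc ∧
    ∀ l, l ≠ i.succ.castSucc → X.1 l = Y.1 l

/-- There is a path in the flag graph from `X` to `Y` with edge colours in `A`. -/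
def FlagReachIn (AP : APolytope n P) (A : Set (Fin n)) (X Y : AP.Flag) : Prop :=
  Relation.ReflTransGen (fun X' Y' => ∃ i ∈ A, AP.FlagAdj i X' Y') X Y

end APolytope

namespace Maniplex

variable {n : ℕ} {V : Type} {M : Maniplex n V}

theorem reach_refl (A : Set (Fin n)) (u : V) : M.ReachIn A u u := Relation.ReflTransGen.refl

theorem reach_symm {A : Set (Fin n)} {u v : V} (h : M.ReachIn A u v) : M.ReachIn A v u := by
  letI : Std.Symm (fun x y : V => ∃ i ∈ A, M.σ i x = y) :=
    ⟨by rintro x y ⟨i, hi, rfl⟩; exact ⟨i, hi, M.invol i x⟩⟩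
  exact Std.Symm.symm (r := Relation.ReflTransGen (fun x y : V => ∃ i ∈ A, M.σ i x = y)) _ _ h

theorem reach_trans {A : Set (Fin n)} {u v w : V} (h₁ : M.ReachIn A u v)
    (h₂ : M.ReachIn A v w) : M.ReachIn A u w := h₁.trans h₂

theorem reach_mono {A B : Set (Fin n)} (hAB : A ⊆ B) {u v : V} (h : M.ReachIn A u v) :
    M.ReachIn B u v :=
  Relation.ReflTransGen.mono (r := fun x y => ∃ i ∈ A, M.σ i x = y)
    (fun _ _ h' => h'.imp (fun _ hh => ⟨hAB hh.1, hh.2⟩)) _ _ h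

theorem reach_single {A : Set (Fin n)} {i : Fin n} (hi : i ∈ A) (u : V) :
    M.ReachIn A u (M.σ i u) :=
  Relation.ReflTransGen.single ⟨i, hi, rfl⟩

theorem reach_empty {A : Set (Fin n)} (hA : ∀ c, c ∉ A) {u v : V}
    (h : M.ReachIn A u v) : u = v := by
  induction h with
  | refl => rfl
  | tail _ hs ih => obtain ⟨i, hi, _⟩ := hs; exact absurd hi (hA i)

theorem comm_of_gap {a b : Fin n} (h : (a : ℕ) + 1 < b ∨ (b : ℕ) + 1 < a) (w : V) :
    M.σ a (M.σ b w) = M.σ b (M.σ a w) := by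
  rcases h with h | h
  · exact (M.comm a b h w).1
  · exact ((M.comm b a h w).1).symm

theorem reach_map {A : Set (Fin n)} {c : Fin n}
    (hc : ∀ a ∈ A, ∀ w : V, M.σ a (M.σ c w) = M.σ c (M.σ a w)) {u v : V}
    (h : M.ReachIn A u v) : M.ReachIn A (M.σ c u) (M.σ c v) := by
  induction h with
  | refl => exact Relation.ReflTransGen.refl
  | tail _ hs ih =>
    obtain ⟨a, ha, rfl⟩ := hs
    exact ih.tail ⟨a, ha, hc a ha _⟩

theorem reach_sort {A B S : Set (Fin n)} (hS : S ⊆ A ∪ B)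
    (hcomm : ∀ a ∈ A, ∀ b ∈ B, ∀ w : V, M.σ a (M.σ b w) = M.σ b (M.σ a w))
    {u v : V} (h : M.ReachIn S u v) : ∃ w, M.ReachIn A u w ∧ M.ReachIn B w v := by
  induction h using Relation.ReflTransGen.head_induction_on with
  | refl => exact ⟨v, Relation.ReflTransGen.refl, Relation.ReflTransGen.refl⟩
  | head hs _ ih =>
    rename_i x y _
    obtain ⟨c, hcS, rfl⟩ := hs
    obtain ⟨w, hA, hB⟩ := ih
    rcases hS hcS with hcA | hcB
    · exact ⟨w, Relation.ReflTransGen.head ⟨c, hcA, rfl⟩ hA, hB⟩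
    · have h2 := reach_map (fun a ha w => hcomm a ha c hcB w) hA
      rw [M.invol c x] at h2
      exact ⟨M.σ c w, h2, Relation.ReflTransGen.head ⟨c, hcB, M.invol c w⟩ hB⟩

theorem reach_singleton {i : Fin n} {w v : V} (h : M.ReachIn {c | c = i} w v) :
    v = w ∨ v = M.σ i w := by
  induction h with
  | refl => exact Or.inl rfl
  | tail _ hs ih =>
    obtain ⟨a, ha, rfl⟩ := hs
    rcases ih with h' | h' <;> rw [h'] <;> rw [show a = i from ha]
    · exact Or.inr rfl
    · exact Or.inl (M.invol i w)

theorem mem_face_self (i : Fin n) (v : V) : v ∈ M.face i v := Relation.ReflTransGen.refl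

theorem mem_face {i : Fin n} {v u : V} : u ∈ M.face i v ↔ M.ReachIn {c | c ≠ i} v u :=
  Iff.rfl

theorem face_eq_of_mem {i : Fin n} {v u : V} (h : u ∈ M.face i v) :
    M.face i v = M.face i u := by
  ext w
  exact ⟨fun hw => reach_trans (reach_symm h) hw, fun hw => reach_trans h hw⟩

theorem sigma_mem_face {i j : Fin n} (hij : j ≠ i) (v : V) : M.σ j v ∈ M.face i v :=
  reach_single hij v

theorem isFace_face (i : Fin n) (v : V) : M.IsFace i (M.face i v) := ⟨v, rfl⟩

theorem IsFace.nonempty {i : Fin n} {S : Set V} (h : M.IsFace i S) : S.Nonempty := by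
  obtain ⟨v, rfl⟩ := h; exact ⟨v, mem_face_self i v⟩

theorem IsFace.face_eq {i : Fin n} {S : Set V} (h : M.IsFace i S) {v : V} (hv : v ∈ S) :
    S = M.face i v := by
  obtain ⟨w, rfl⟩ := h; exact face_eq_of_mem hv

end Maniplex

namespace Maniplex

variable {n : ℕ} {V : Type} {M : Maniplex n V}

theorem reach_conn (u v : V) : M.ReachIn Set.univ u v := by
  refine Relation.ReflTransGen.mono
    (?_ : ∀ x y, (∃ i, M.σ i x = y) → ∃ i ∈ (Set.univ : Set (Fin n)), M.σ i x = y) _ _ (M.conn u v)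
  rintro x y ⟨i, rfl⟩
  exact ⟨i, Set.mem_univ i, rfl⟩

/-- W2': removing a colour from a down-set path. -/
theorem reach_lt_remove (hW : M.WPIP) {b j : Fin n} (hbj : b < j) {u v : V}
    (h1 : M.ReachIn {c | c < j} u v) (h2 : M.ReachIn {c | c ≠ b} u v) :
    M.ReachIn {c | c < j ∧ c ≠ b} u v := by
  obtain ⟨y, hgt, hlt⟩ := reach_sort (A := {c | b < c}) (B := {c | c < b})
    (fun c hc => by
      simp only [Set.mem_setOf_eq, Set.mem_union, Fin.lt_def, ne_eq, ← Fin.val_eq_val] at hc ⊢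
      omega)
    (fun a ha b' hb' => by
      simp only [Set.mem_setOf_eq, Fin.lt_def] at ha hb'
      exact fun w => comm_of_gap (Or.inr (by omega)) w) h2
  have h3 : M.ReachIn {c | c < j} u y :=
    reach_trans h1 (reach_mono (fun c hc => by
      simp only [Set.mem_setOf_eq, Fin.lt_def] at hc ⊢; omega) (reach_symm hlt))
  have h4 := hW b j hbj u y hgt h3
  refine reach_trans (reach_mono ?_ h4) (reach_mono ?_ hlt) <;>
    exact fun c hc => by
      simp only [Set.mem_setOf_eq, Fin.lt_def, ne_eq, ← Fin.val_eq_val] at hc ⊢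
      simp only [Fin.lt_def] at hbj
      omega

/-- S3: intersecting an arbitrary path with a down-set path, when all colours
`≥ j` are present in `A`. -/
theorem reach_S3 (hW : M.WPIP) {A : Set (Fin n)} {j : Fin n}
    (hA : ∀ c : Fin n, j ≤ c → c ∈ A) {u v : V}
    (h1 : M.ReachIn A u v) (h2 : M.ReachIn {c | c < j} u v) :
    M.ReachIn {c | c ∈ A ∧ c < j} u v := by
  classical
  by_cases hE : ∀ c : Fin n, c ∈ A
  · refine reach_mono ?_ h2
    exact fun c hc => ⟨hE c, hc⟩
  · push_neg at hE
    have hT : (Finset.univ.filter (fun c : Fin n => c ∉ A)).Nonempty := by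
      obtain ⟨c, hc⟩ := hE
      exact ⟨c, by simp [hc]⟩
    set b := (Finset.univ.filter (fun c : Fin n => c ∉ A)).max' hT with hbdef
    have hbA : b ∉ A := by
      have := (Finset.univ.filter (fun c : Fin n => c ∉ A)).max'_mem hT
      simpa using this
    have hmax : ∀ c : Fin n, c ∉ A → c ≤ b := by
      intro c hc
      exact Finset.le_max' _ c (by simp [hc])
    have hbj : b < j := by
      by_contra hh
      exact hbA (hA b (le_of_not_gt hh))
    have hsub : A ⊆ {c | c ∈ A ∧ c < b} ∪ {c | b < c} := by
      intro c hc
      have hcb : c ≠ b := fun hcb => hbA (hcb ▸ hc)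
      rcases lt_trichotomy c b with h' | h' | h'
      · exact Or.inl ⟨hc, h'⟩
      · exact absurd h' hcb
      · exact Or.inr h'
    obtain ⟨w, hleft, hright⟩ := reach_sort (A := {c | c ∈ A ∧ c < b}) (B := {c | b < c}) hsub
      (fun a ha b' hb' => by
        simp only [Set.mem_setOf_eq, Fin.lt_def] at ha hb'
        exact fun w => comm_of_gap (Or.inl (by omega)) w) h1
    have h3 : M.ReachIn {c | c < j} w v :=
      reach_trans (reach_mono (fun c hc => by
        simp only [Set.mem_setOf_eq, Fin.lt_def] at hc ⊢
        simp only [Fin.lt_def] at hbj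
        omega) (reach_symm hleft)) h2
    have h4 := hW b j hbj w v hright h3
    refine reach_trans (reach_mono ?_ hleft) (reach_mono ?_ h4)
    · intro c hc
      simp only [Set.mem_setOf_eq, Fin.lt_def] at hc ⊢
      simp only [Fin.lt_def] at hbj
      exact ⟨hc.1, by omega⟩
    · intro c hc
      simp only [Set.mem_setOf_eq] at hc ⊢
      refine ⟨?_, hc.2⟩
      by_contra hcA
      exact absurd hc.1 (not_lt.mpr (hmax c hcA))

/-- S2: removing a colour `b` when all colours `≥ b` are present in `A`. -/
theorem reach_S2 (hW : M.WPIP) {A : Set (Fin n)} {b : Fin n}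
    (hA : ∀ c : Fin n, b ≤ c → c ∈ A) {u v : V}
    (h1 : M.ReachIn A u v) (h2 : M.ReachIn {c | c ≠ b} u v) :
    M.ReachIn {c | c ∈ A ∧ c ≠ b} u v := by
  obtain ⟨y, hlt, hgt⟩ := reach_sort (A := {c | c < b}) (B := {c | b < c})
    (fun c hc => by
      simp only [Set.mem_setOf_eq, Set.mem_union, Fin.lt_def, ne_eq, ← Fin.val_eq_val] at hc ⊢
      omega)
    (fun a ha b' hb' => by
      simp only [Set.mem_setOf_eq, Fin.lt_def] at ha hb'
      exact fun w => comm_of_gap (Or.inl (by omega)) w) h2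
  have h3 : M.ReachIn A u y :=
    reach_trans h1 (reach_symm (reach_mono (fun c hc => hA c (le_of_lt hc)) hgt))
  have h4 := reach_S3 hW (j := b) hA h3 hlt
  refine reach_trans (reach_mono ?_ h4) (reach_mono ?_ hgt)
  · intro c hc
    simp only [Set.mem_setOf_eq, Fin.lt_def, ne_eq, ← Fin.val_eq_val] at hc ⊢
    exact ⟨hc.1, by omega⟩
  · intro c hc
    simp only [Set.mem_setOf_eq] at hc ⊢
    refine ⟨hA c (le_of_lt hc), ?_⟩
    simp only [ne_eq, ← Fin.val_eq_val]
    simp only [Fin.lt_def] at hc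
    omega

/-- F4: avoiding a whole set of colours. -/
theorem reach_avoid (hW : M.WPIP) (K : Finset (Fin n)) {u v : V}
    (h : ∀ c ∈ K, M.ReachIn {x | x ≠ c} u v) : M.ReachIn {c | c ∉ K} u v := by
  classical
  induction K using Finset.strongInductionOn with
  | _ K ih =>
    rcases K.eq_empty_or_nonempty with rfl | hK
    · exact reach_mono (fun c _ => by simp) (reach_conn u v)
    · set b := K.max' hK with hbdef
      have hb : b ∈ K := K.max'_mem hK
      have ih' := ih (K.erase b) (Finset.erase_ssubset hb)
        (fun c hc => h c (Finset.mem_of_mem_erase hc))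
      have hA : ∀ c : Fin n, b ≤ c → c ∈ {c : Fin n | c ∉ K.erase b} := by
        intro c hc hmem
        have h1 := Finset.mem_of_mem_erase hmem
        have h2 := Finset.ne_of_mem_erase hmem
        exact h2 (le_antisymm (K.le_max' c h1) hc)
      have h5 := reach_S2 hW (b := b) hA ih' (h b hb)
      refine reach_mono ?_ h5
      intro c hc
      simp only [Set.mem_setOf_eq] at hc ⊢
      intro hcK
      exact hc.1 (Finset.mem_erase.mpr ⟨hc.2, hcK⟩)

/-- F2: two vertices in the same `i`-face for every `i` coincide. -/
theorem eq_of_reach_all (hW : M.WPIP) {u v : V}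
    (h : ∀ c : Fin n, M.ReachIn {x | x ≠ c} u v) : u = v := by
  classical
  have h5 := reach_avoid hW Finset.univ (fun c _ => h c)
  exact reach_empty (fun c hc => by simp at hc) h5

/-- C1: `σ i v` is not in the `i`-face of `v`. -/
theorem not_reach_sigma (hW : M.WPIP) (i : Fin n) (v : V) :
    ¬ M.ReachIn {c | c ≠ i} v (M.σ i v) := by
  intro h
  obtain ⟨w, hlt, hgt⟩ := reach_sort (A := {c | c < i}) (B := {c | i < c})
    (fun c hc => by
      simp only [Set.mem_setOf_eq, Set.mem_union, Fin.lt_def, ne_eq, ← Fin.val_eq_val] at hc ⊢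
      omega)
    (fun a ha b' hb' => by
      simp only [Set.mem_setOf_eq, Fin.lt_def] at ha hb'
      exact fun w => comm_of_gap (Or.inl (by omega)) w) h
  have hwv : w = v := by
    rcases Nat.eq_zero_or_pos i.val with h0 | hpos
    · exact (reach_empty (fun c hc => by
        simp only [Set.mem_setOf_eq, Fin.lt_def] at hc; omega) hlt).symm
    · obtain ⟨i', hi'⟩ : ∃ i' : Fin n, (i' : ℕ) = i.val - 1 := ⟨⟨i.val - 1, by omega⟩, rfl⟩
      have hstep : M.ReachIn {c | i' < c} (M.σ i v) v := by
        have h6 := reach_single (M := M) (A := {c | i' < c}) (i := i)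
          (by simp only [Set.mem_setOf_eq, Fin.lt_def, hi']; omega) (M.σ i v)
        rwa [M.invol] at h6
      have h1 : M.ReachIn {c | i' < c} w v :=
        reach_trans (reach_mono (fun c hc => by
          simp only [Set.mem_setOf_eq, Fin.lt_def, hi'] at hc ⊢; omega) hgt) hstep
      have h2 : M.ReachIn {c | c < i} w v := reach_symm hlt
      have h3 := hW i' i (by simp only [Fin.lt_def, hi']; omega) w v h1 h2
      exact reach_empty (fun c hc => by
        simp only [Set.mem_setOf_eq, Fin.lt_def, hi'] at hc; omega) h3
  rw [hwv] at hgt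
  rcases Nat.lt_or_ge (i.val + 1) n with hlt2 | hge
  · obtain ⟨j, hj⟩ : ∃ j : Fin n, (j : ℕ) = i.val + 1 := ⟨⟨i.val + 1, hlt2⟩, rfl⟩
    have h2 : M.ReachIn {c | c < j} v (M.σ i v) :=
      reach_single (by simp only [Set.mem_setOf_eq, Fin.lt_def, hj]; omega) v
    have h3 := hW i j (by simp only [Fin.lt_def, hj]; omega) v (M.σ i v) hgt h2
    have h4 := reach_empty (fun c hc => by
      simp only [Set.mem_setOf_eq, Fin.lt_def, hj] at hc; omega) h3
    exact M.nofix i v h4.symm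
  · have h4 := reach_empty (fun c hc => by
      have := c.isLt
      simp only [Set.mem_setOf_eq, Fin.lt_def] at hc
      omega) hgt
    exact M.nofix i v h4.symm

/-- D1: a path whose colours all commute with `i` (or equal `i`) lands in the
`i`-face of `v` or of `σ i v`. -/
theorem reach_face_cases (i : Fin n) {B : Set (Fin n)}
    (hB : ∀ c ∈ B, c = i ∨ (c : ℕ) + 1 < i ∨ (i : ℕ) + 1 < c) {q v : V}
    (h : M.ReachIn B q v) :
    M.ReachIn {c | c ≠ i} q v ∨ M.ReachIn {c | c ≠ i} q (M.σ i v) := by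
  obtain ⟨w, h1, h2⟩ := reach_sort (A := {c | c ∈ B ∧ c ≠ i}) (B := {c | c = i})
    (fun c hc => by
      by_cases hci : c = i
      · exact Or.inr hci
      · exact Or.inl ⟨hc, hci⟩)
    (by
      rintro a ⟨haB, hai⟩ b' (rfl : b' = i)
      rcases hB a haB with h' | h' | h'
      · exact absurd h' hai
      · exact fun w => comm_of_gap (Or.inl h') w
      · exact fun w => comm_of_gap (Or.inr h') w) h
  have h1' : M.ReachIn {c | c ≠ i} q w := reach_mono (fun c hc => hc.2) h1
  rcases reach_singleton h2 with rfl | hv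
  · exact Or.inl h1'
  · right
    have hw : M.σ i v = w := by rw [hv, M.invol]
    rw [hw]; exact h1'

end Maniplex

namespace Maniplex

variable {n : ℕ} {V : Type} {M : Maniplex n V}

theorem faceLe_refl (F : M.FaceT) : M.faceLe F F := by
  refine ⟨le_refl _, ?_⟩
  obtain ⟨v, hv⟩ := F.2.nonempty
  exact ⟨v, hv, hv⟩

theorem faceLe_trans {F G H : M.FaceT} (h1 : M.faceLe F G) (h2 : M.faceLe G H) :
    M.faceLe F H := by
  obtain ⟨hr1, u, huF, huG⟩ := h1
  obtain ⟨hr2, w, hwG, hwH⟩ := h2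
  refine ⟨le_trans hr1 hr2, ?_⟩
  have hFu : F.1.2 = M.face F.1.1 u := F.2.face_eq huF
  have hHw : H.1.2 = M.face H.1.1 w := H.2.face_eq hwH
  have hreach : M.ReachIn {c | c ≠ G.1.1} u w := by
    have h3 := hwG
    rw [G.2.face_eq huG] at h3
    exact h3
  obtain ⟨t, h3, h4⟩ := reach_sort (A := {c | G.1.1 < c}) (B := {c | c < G.1.1})
    (fun c hc => by
      simp only [Set.mem_setOf_eq, Set.mem_union, Fin.lt_def, ne_eq, ← Fin.val_eq_val] at hc ⊢
      omega)
    (fun a ha b' hb' => by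
      simp only [Set.mem_setOf_eq, Fin.lt_def] at ha hb'
      exact fun w => comm_of_gap (Or.inr (by omega)) w) hreach
  refine ⟨t, ?_, ?_⟩
  · rw [hFu]
    refine reach_mono ?_ h3
    intro c hc
    simp only [Set.mem_setOf_eq, Fin.lt_def, ne_eq, ← Fin.val_eq_val] at hc ⊢
    have := hr1
    simp only [Fin.le_def] at this
    omega
  · rw [hHw]
    refine reach_mono ?_ (reach_symm h4)
    intro c hc
    simp only [Set.mem_setOf_eq, Fin.lt_def, ne_eq, ← Fin.val_eq_val] at hc ⊢
    have := hr2
    simp only [Fin.le_def] at this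
    omega

theorem faceT_ext {F G : M.FaceT} (h1 : F.1.1 = G.1.1) (h2 : F.1.2 = G.1.2) : F = G :=
  Subtype.ext (Prod.ext h1 h2)

theorem faceLe_antisymm {F G : M.FaceT} (h1 : M.faceLe F G) (h2 : M.faceLe G F) : F = G := by
  obtain ⟨hr1, u, huF, huG⟩ := h1
  obtain ⟨hr2, -⟩ := h2
  have hr : F.1.1 = G.1.1 := le_antisymm hr1 hr2
  refine faceT_ext hr ?_
  rw [F.2.face_eq huF, G.2.face_eq huG, hr]

/-- The partial order on `P_M`. -/
def pOrder (M : Maniplex n V) : PartialOrder M.PFace where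
  le := M.ple
  le_refl x := by
    rcases x with _ | (_ | F)
    · trivial
    · trivial
    · exact faceLe_refl F
  le_trans x y z hxy hyz := by
    rcases x with _ | (_ | F) <;> rcases y with _ | (_ | G) <;> rcases z with _ | (_ | H) <;>
      first
        | trivial
        | exact hxy.elim
        | exact hyz.elim
        | exact faceLe_trans hxy hyz
  le_antisymm x y hxy hyx := by
    rcases x with _ | (_ | F) <;> rcases y with _ | (_ | G) <;>
      first
        | rfl
        | exact hxy.elim
        | exact hyx.elim
        | exact congrArg _ (congrArg _ (faceLe_antisymm hxy hyx))

theorem ple_none (x : M.PFace) : M.ple none x := by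
  rcases x with _ | (_ | F) <;> trivial

theorem ple_top (x : M.PFace) : M.ple x (some none) := by
  rcases x with _ | (_ | F) <;> trivial

theorem eq_none_of_prank {x : M.PFace} (h : M.prank x = -1) : x = none := by
  rcases x with _ | (_ | F)
  · rfl
  · exact absurd h (by simp only [prank]; omega)
  · exact absurd h (by simp only [prank]; omega)

theorem eq_topf_of_prank {x : M.PFace} (h : M.prank x = (n : ℤ)) : x = some none := by
  rcases x with _ | (_ | F)
  · exact absurd h (by simp only [prank]; omega)
  · rfl
  · refine absurd h (by simp only [prank]; have := F.1.1.isLt; omega)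

theorem proper_of_prank {x : M.PFace} {k : ℕ} (hk : k < n) (h : M.prank x = (k : ℤ)) :
    ∃ F : M.FaceT, x = some (some F) ∧ (F.1.1 : ℕ) = k := by
  rcases x with _ | (_ | F)
  · exact absurd h (by simp only [prank]; omega)
  · exact absurd h (by simp only [prank]; omega)
  · exact ⟨F, rfl, by simp only [prank] at h; omega⟩

end Maniplex

namespace Maniplex

variable {n : ℕ} {V : Type} {M : Maniplex n V}

theorem sort_ne (b : Fin n) {u v : V} (h : M.ReachIn {c | c ≠ b} u v) :
    ∃ w, M.ReachIn {c | c < b} u w ∧ M.ReachIn {c | b < c} w v :=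
  reach_sort
    (fun c hc => by
      simp only [Set.mem_setOf_eq, Set.mem_union, Fin.lt_def, ne_eq, ← Fin.val_eq_val] at hc ⊢
      omega)
    (fun a ha b' hb' => by
      simp only [Set.mem_setOf_eq, Fin.lt_def] at ha hb'
      exact fun w => comm_of_gap (Or.inl (by omega)) w) h

theorem sort_ne' (b : Fin n) {u v : V} (h : M.ReachIn {c | c ≠ b} u v) :
    ∃ w, M.ReachIn {c | b < c} u w ∧ M.ReachIn {c | c < b} w v :=
  reach_sort
    (fun c hc => by
      simp only [Set.mem_setOf_eq, Set.mem_union, Fin.lt_def, ne_eq, ← Fin.val_eq_val] at hc ⊢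
      omega)
    (fun a ha b' hb' => by
      simp only [Set.mem_setOf_eq, Fin.lt_def] at ha hb'
      exact fun w => comm_of_gap (Or.inr (by omega)) w) h

theorem face_cases_pair (i : Fin n) {p s v : V} {B : Set (Fin n)}
    (hB : ∀ c ∈ B, c = i ∨ (c : ℕ) + 1 < i ∨ (i : ℕ) + 1 < c)
    (h1 : M.ReachIn {c | c ≠ i} p s) (h2 : M.ReachIn B s v) :
    M.face i p = M.face i v ∨ M.face i p = M.face i (M.σ i v) := by
  rcases reach_face_cases i hB h2 with h | h
  · exact Or.inl (face_eq_of_mem (reach_trans h1 h))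
  · exact Or.inr (face_eq_of_mem (reach_trans h1 h))

theorem face_ne (hW : M.WPIP) (i : Fin n) (v : V) :
    M.face i v ≠ M.face i (M.σ i v) := by
  intro h
  have h2 : M.σ i v ∈ M.face i v := h ▸ mem_face_self i (M.σ i v)
  exact not_reach_sigma hW i v h2

theorem prank_mk (i : Fin n) (S : Set V) (h : M.IsFace i S) :
    M.prank (some (some ⟨(i, S), h⟩)) = ((i : ℕ) : ℤ) := rfl

theorem pair_ne (hW : M.WPIP) (i : Fin n) (v : V) :
    (some (some ⟨(i, M.face i v), isFace_face i v⟩) : M.PFace) ≠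
      some (some ⟨(i, M.face i (M.σ i v)), isFace_face i (M.σ i v)⟩) := by
  intro h
  simp only [Option.some.injEq] at h
  have h2 := congrArg (fun F : M.FaceT => F.1.2) (Option.some_injective _ h)
  exact face_ne hW i v h2

theorem pdiamond (hW : M.WPIP) (x z : M.PFace) (hxz : M.ple x z)
    (hrz : M.prank z = M.prank x + 2) :
    ∃ y₁ y₂ : M.PFace, y₁ ≠ y₂ ∧
      ∀ y : M.PFace, (M.ple x y ∧ M.ple y z ∧ M.prank y = M.prank x + 1) ↔
        (y = y₁ ∨ y = y₂) := by
  classical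
  have hxlb : -1 ≤ M.prank x := by
    rcases x with _ | (_ | F) <;> · simp only [prank]; omega
  have hzub : M.prank z ≤ (n : ℤ) := by
    rcases z with _ | (_ | F)
    · simp only [prank]; omega
    · simp only [prank]; omega
    · have := F.1.1.isLt; simp only [prank]; omega
  have hiNn : ((M.prank x + 1).toNat) < n := by omega
  set iN := (M.prank x + 1).toNat with hiNdef
  have hiN : (iN : ℤ) = M.prank x + 1 := Int.toNat_of_nonneg (by omega)
  set i : Fin n := ⟨iN, hiNn⟩ with hidef
  have hival : (i : ℕ) = iN := rfl
  have hx' : (x = none ∧ iN = 0) ∨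
      ∃ Fx, x = some (some Fx) ∧ (Fx.1.1 : ℕ) = iN - 1 ∧ 1 ≤ iN := by
    by_cases h0 : M.prank x = -1
    · exact Or.inl ⟨eq_none_of_prank h0, by omega⟩
    · obtain ⟨Fx, hx, hv⟩ := proper_of_prank (x := x) (k := iN - 1) (by omega) (by omega)
      exact Or.inr ⟨Fx, hx, hv, by omega⟩
  have hz' : (z = some none ∧ iN + 1 = n) ∨
      ∃ Fz, z = some (some Fz) ∧ (Fz.1.1 : ℕ) = iN + 1 := by
    by_cases h0 : M.prank z = (n : ℤ)
    · exact Or.inl ⟨eq_topf_of_prank h0, by omega⟩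
    · obtain ⟨Fz, hz, hv⟩ := proper_of_prank (x := z) (k := iN + 1) (by omega) (by omega)
      exact Or.inr ⟨Fz, hz, hv⟩
  rcases hx' with ⟨rfl, hi0⟩ | ⟨Fx, rfl, hFx1, hiN1⟩ <;>
    rcases hz' with ⟨rfl, hzn⟩ | ⟨Fz, rfl, hFz1⟩
  · -- x = ⊥, z = ⊤ : n = 1
    obtain ⟨v⟩ := M.nonempty
    refine ⟨some (some ⟨(i, M.face i v), isFace_face i v⟩),
            some (some ⟨(i, M.face i (M.σ i v)), isFace_face i (M.σ i v)⟩),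
            pair_ne hW i v, ?_⟩
    intro y
    constructor
    · rintro ⟨hxy, hyz, hry⟩
      obtain ⟨Fy, rfl, hFy⟩ := proper_of_prank (x := y) hiNn (by simp only [prank] at hry ⊢; omega)
      have hFyi : Fy.1.1 = i := Fin.ext hFy
      obtain ⟨q, hq⟩ := Fy.2.nonempty
      have hgap : ∀ c ∈ (Set.univ : Set (Fin n)), c = i ∨ (c : ℕ) + 1 < i ∨ (i : ℕ) + 1 < c := by
        intro c _
        have := c.isLt
        exact Or.inl (Fin.ext (by simp only [hival]; omega))
      have pair := face_cases_pair (M := M) i hgap (reach_refl _ q) (reach_conn q v)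
      have hset : Fy.1.2 = M.face i q := by rw [Fy.2.face_eq hq, hFyi]
      rcases pair with h | h
      · exact Or.inl (congrArg _ (congrArg _ (faceT_ext hFyi (hset.trans h))))
      · exact Or.inr (congrArg _ (congrArg _ (faceT_ext hFyi (hset.trans h))))
    · rintro (rfl | rfl) <;>
        exact ⟨trivial, trivial, by simp only [prank]; omega⟩
  · -- x = ⊥, z proper
    obtain ⟨v, hvz⟩ := Fz.2.nonempty
    refine ⟨some (some ⟨(i, M.face i v), isFace_face i v⟩),
            some (some ⟨(i, M.face i (M.σ i v)), isFace_face i (M.σ i v)⟩),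
            pair_ne hW i v, ?_⟩
    intro y
    constructor
    · rintro ⟨hxy, hyz, hry⟩
      obtain ⟨Fy, rfl, hFy⟩ := proper_of_prank (x := y) hiNn (by simp only [prank] at hry ⊢; omega)
      have hFyi : Fy.1.1 = i := Fin.ext hFy
      obtain ⟨-, q, hqy, hqz⟩ := hyz
      have h3 : M.ReachIn {c | c ≠ Fz.1.1} q v := by
        have h4 := hvz
        rw [Fz.2.face_eq hqz] at h4
        exact h4
      have hgap : ∀ c ∈ {c : Fin n | c ≠ Fz.1.1}, c = i ∨ (c : ℕ) + 1 < i ∨ (i : ℕ) + 1 < c := by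
        intro c hc
        simp only [Set.mem_setOf_eq, ne_eq, ← Fin.val_eq_val, hFz1] at hc
        rcases Nat.lt_trichotomy (c : ℕ) iN with h' | h' | h'
        · right; left; simp only [hival]; omega
        · exact Or.inl (Fin.ext (by simp only [hival]; omega))
        · right; right; simp only [hival]; omega
      have pair := face_cases_pair i hgap (reach_refl _ q) h3
      have hset : Fy.1.2 = M.face i q := by rw [Fy.2.face_eq hqy, hFyi]
      rcases pair with h | h
      · exact Or.inl (congrArg _ (congrArg _ (faceT_ext hFyi (hset.trans h))))
      · exact Or.inr (congrArg _ (congrArg _ (faceT_ext hFyi (hset.trans h))))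
    · have hile : i ≤ Fz.1.1 := by simp only [Fin.le_def, hival, hFz1]; omega
      have hine : i ≠ Fz.1.1 := by simp only [ne_eq, ← Fin.val_eq_val, hival, hFz1]; omega
      have hsv : M.σ i v ∈ Fz.1.2 := by
        rw [Fz.2.face_eq hvz]
        exact sigma_mem_face hine v
      rintro (rfl | rfl)
      · exact ⟨trivial, ⟨hile, v, mem_face_self i v, hvz⟩, by simp only [prank]; omega⟩
      · exact ⟨trivial, ⟨hile, M.σ i v, mem_face_self i _, hsv⟩, by simp only [prank]; omega⟩
  · -- x proper, z = ⊤
    obtain ⟨v, hvx⟩ := Fx.2.nonempty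
    refine ⟨some (some ⟨(i, M.face i v), isFace_face i v⟩),
            some (some ⟨(i, M.face i (M.σ i v)), isFace_face i (M.σ i v)⟩),
            pair_ne hW i v, ?_⟩
    intro y
    constructor
    · rintro ⟨hxy, hyz, hry⟩
      obtain ⟨Fy, rfl, hFy⟩ := proper_of_prank (x := y) hiNn (by simp only [prank] at hry ⊢; omega)
      have hFyi : Fy.1.1 = i := Fin.ext hFy
      obtain ⟨-, p, hpx, hpy⟩ := hxy
      have h1 : M.ReachIn {c | c ≠ Fx.1.1} p v := by
        have h4 := hvx
        rw [Fx.2.face_eq hpx] at h4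
        exact h4
      have hgap : ∀ c ∈ {c : Fin n | c ≠ Fx.1.1}, c = i ∨ (c : ℕ) + 1 < i ∨ (i : ℕ) + 1 < c := by
        intro c hc
        simp only [Set.mem_setOf_eq, ne_eq, ← Fin.val_eq_val, hFx1] at hc
        have := c.isLt
        rcases Nat.lt_trichotomy (c : ℕ) iN with h' | h' | h'
        · right; left; simp only [hival]; omega
        · exact Or.inl (Fin.ext (by simp only [hival]; omega))
        · right; right; simp only [hival]; omega
      have pair := face_cases_pair i hgap (reach_refl _ p) h1
      have hset : Fy.1.2 = M.face i p := by rw [Fy.2.face_eq hpy, hFyi]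
      rcases pair with h | h
      · exact Or.inl (congrArg _ (congrArg _ (faceT_ext hFyi (hset.trans h))))
      · exact Or.inr (congrArg _ (congrArg _ (faceT_ext hFyi (hset.trans h))))
    · have hile : Fx.1.1 ≤ i := by simp only [Fin.le_def, hival, hFx1]; omega
      have hine : i ≠ Fx.1.1 := by simp only [ne_eq, ← Fin.val_eq_val, hival, hFx1]; omega
      have hsv : M.σ i v ∈ Fx.1.2 := by
        rw [Fx.2.face_eq hvx]
        exact sigma_mem_face hine v
      rintro (rfl | rfl)
      · exact ⟨⟨hile, v, hvx, mem_face_self i v⟩, trivial, by simp only [prank]; omega⟩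
      · exact ⟨⟨hile, M.σ i v, hsv, mem_face_self i _⟩, trivial, by simp only [prank]; omega⟩
  · -- x, z both proper: main case
    obtain ⟨hab, v, hvx, hvz⟩ := hxz
    refine ⟨some (some ⟨(i, M.face i v), isFace_face i v⟩),
            some (some ⟨(i, M.face i (M.σ i v)), isFace_face i (M.σ i v)⟩),
            pair_ne hW i v, ?_⟩
    intro y
    constructor
    · rintro ⟨hxy, hyz, hry⟩
      obtain ⟨Fy, rfl, hFy⟩ := proper_of_prank (x := y) hiNn (by simp only [prank] at hry ⊢; omega)
      have hFyi : Fy.1.1 = i := Fin.ext hFy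
      obtain ⟨-, p, hpx, hpy⟩ := hxy
      obtain ⟨-, q, hqy, hqz⟩ := hyz
      have h1 : M.ReachIn {c | c ≠ Fx.1.1} p v := by
        have h4 := hvx
        rw [Fx.2.face_eq hpx] at h4
        exact h4
      have h2 : M.ReachIn {c | c ≠ i} p q := by
        have h4 := hqy
        rw [Fy.2.face_eq hpy, hFyi] at h4
        exact h4
      have h3 : M.ReachIn {c | c ≠ Fz.1.1} q v := by
        have h4 := hvz
        rw [Fz.2.face_eq hqz] at h4
        exact h4
      obtain ⟨s, hps, hsq⟩ := sort_ne' i h2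
      obtain ⟨t, hqt, htv⟩ := sort_ne Fz.1.1 h3
      have s1 : M.ReachIn {c | c < Fz.1.1} s t :=
        reach_trans (reach_mono (fun c hc => by
          simp only [Set.mem_setOf_eq, Fin.lt_def, hival, hFz1] at hc ⊢; omega) hsq) hqt
      have s2 : M.ReachIn {c | c ≠ Fx.1.1} s t := by
        refine reach_trans (reach_trans (reach_mono ?_ (reach_symm hps)) h1)
          (reach_mono ?_ (reach_symm htv))
        · intro c hc
          simp only [Set.mem_setOf_eq, Fin.lt_def, hival, ne_eq, ← Fin.val_eq_val, hFx1] at hc ⊢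
          omega
        · intro c hc
          simp only [Set.mem_setOf_eq, Fin.lt_def, ne_eq, ← Fin.val_eq_val, hFx1, hFz1] at hc ⊢
          omega
      have hab' : Fx.1.1 < Fz.1.1 := by simp only [Fin.lt_def, hFx1, hFz1]; omega
      have s4 := reach_lt_remove hW hab' s1 s2
      have s5 : M.ReachIn {c | c ≠ Fx.1.1 ∧ c ≠ Fz.1.1} s v := by
        refine reach_trans (reach_mono ?_ s4) (reach_mono ?_ htv)
        · intro c hc
          simp only [Set.mem_setOf_eq, Fin.lt_def, ne_eq, ← Fin.val_eq_val, hFx1, hFz1] at hc ⊢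
          omega
        · intro c hc
          simp only [Set.mem_setOf_eq, Fin.lt_def, ne_eq, ← Fin.val_eq_val, hFx1, hFz1] at hc ⊢
          omega
      have hgap : ∀ c ∈ {c : Fin n | c ≠ Fx.1.1 ∧ c ≠ Fz.1.1},
          c = i ∨ (c : ℕ) + 1 < i ∨ (i : ℕ) + 1 < c := by
        intro c hc
        simp only [Set.mem_setOf_eq, ne_eq, ← Fin.val_eq_val, hFx1, hFz1] at hc
        rcases Nat.lt_trichotomy (c : ℕ) iN with h' | h' | h'
        · right; left; simp only [hival]; omega
        · exact Or.inl (Fin.ext (by simp only [hival]; omega))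
        · right; right; simp only [hival]; omega
      have hps' : M.ReachIn {c | c ≠ i} p s :=
        reach_mono (fun c hc => by
          simp only [Set.mem_setOf_eq, Fin.lt_def, ne_eq, ← Fin.val_eq_val] at hc ⊢
          omega) hps
      have pair := face_cases_pair i hgap hps' s5
      have hset : Fy.1.2 = M.face i p := by rw [Fy.2.face_eq hpy, hFyi]
      rcases pair with h | h
      · exact Or.inl (congrArg _ (congrArg _ (faceT_ext hFyi (hset.trans h))))
      · exact Or.inr (congrArg _ (congrArg _ (faceT_ext hFyi (hset.trans h))))
    · have hile1 : Fx.1.1 ≤ i := by simp only [Fin.le_def, hival, hFx1]; omega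
      have hile2 : i ≤ Fz.1.1 := by simp only [Fin.le_def, hival, hFz1]; omega
      have hine1 : i ≠ Fx.1.1 := by simp only [ne_eq, ← Fin.val_eq_val, hival, hFx1]; omega
      have hine2 : i ≠ Fz.1.1 := by simp only [ne_eq, ← Fin.val_eq_val, hival, hFz1]; omega
      have hsv1 : M.σ i v ∈ Fx.1.2 := by
        rw [Fx.2.face_eq hvx]
        exact sigma_mem_face hine1 v
      have hsv2 : M.σ i v ∈ Fz.1.2 := by
        rw [Fz.2.face_eq hvz]
        exact sigma_mem_face hine2 v
      rintro (rfl | rfl)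
      · exact ⟨⟨hile1, v, hvx, mem_face_self i v⟩, ⟨hile2, v, mem_face_self i v, hvz⟩,
          by simp only [prank]; omega⟩
      · exact ⟨⟨hile1, M.σ i v, hsv1, mem_face_self i _⟩,
          ⟨hile2, M.σ i v, mem_face_self i _, hsv2⟩, by simp only [prank]; omega⟩

end Maniplex

namespace Maniplex

variable {n : ℕ} {V : Type} {M : Maniplex n V}

instance : PartialOrder M.PFace := M.pOrder

theorem prank_lb (x : M.PFace) : -1 ≤ M.prank x := by
  rcases x with _ | (_ | F) <;> · simp only [prank]; omega

theorem prank_ub (x : M.PFace) : M.prank x ≤ (n : ℤ) := by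
  rcases x with _ | (_ | F)
  · simp only [prank]; omega
  · simp only [prank]; omega
  · have := F.1.1.isLt; simp only [prank]; omega

theorem ple_rank_eq {x y : M.PFace} (h : M.ple x y) (hr : M.prank x = M.prank y) : x = y := by
  rcases x with _ | (_ | F) <;> rcases y with _ | (_ | G)
  · rfl
  · exfalso; simp only [prank] at hr; omega
  · exfalso; simp only [prank] at hr; omega
  · exact h.elim
  · rfl
  · exact h.elim
  · exact h.elim
  · exfalso; have := F.1.1.isLt; simp only [prank] at hr; omega
  · have hFin : F.1.1 = G.1.1 := by
      simp only [prank] at hr; exact Fin.ext (by omega)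
    refine congrArg _ (congrArg _ (faceLe_antisymm h ⟨le_of_eq hFin.symm, ?_⟩))
    obtain ⟨w, hw1, hw2⟩ := h.2
    exact ⟨w, hw2, hw1⟩

theorem ple_rank_le {x y : M.PFace} (h : M.ple x y) : M.prank x ≤ M.prank y := by
  rcases x with _ | (_ | F) <;> rcases y with _ | (_ | G)
  · omega
  · simp only [prank]; omega
  · simp only [prank]; omega
  · exact h.elim
  · omega
  · exact h.elim
  · exact h.elim
  · have := F.1.1.isLt; simp only [prank]; omega
  · have h2 := h.1; simp only [prank]; simp only [Fin.le_def] at h2; omega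

theorem ple_rank_lt {x y : M.PFace} (h : M.ple x y) (hne : x ≠ y) :
    M.prank x < M.prank y :=
  lt_of_le_of_ne (ple_rank_le h) (fun hr => hne (ple_rank_eq h hr))

theorem prank_strictMono : ∀ x y : M.PFace, x < y → M.prank x < M.prank y := by
  intro x y hxy
  exact ple_rank_lt (le_of_lt hxy) (ne_of_lt hxy)

end Maniplex

namespace Maniplex

variable {n : ℕ} {V : Type} {M : Maniplex n V}

theorem pchain_full (C : Set M.PFace) (hC : IsMaxChain (· ≤ ·) C)
    (m : ℤ) (h1 : -1 ≤ m) (h2 : m ≤ (n : ℤ)) :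
    ∃! x, x ∈ C ∧ M.prank x = m := by
  classical
  have hbotmem : (none : M.PFace) ∈ C := by
    have hchain : IsChain (· ≤ ·) (insert (none : M.PFace) C) :=
      hC.1.insert (fun y _ _ => Or.inl (ple_none y))
    have h3 := hC.2 hchain (Set.subset_insert _ _)
    rw [h3]; exact Set.mem_insert _ _
  have htopmem : (some none : M.PFace) ∈ C := by
    have hchain : IsChain (· ≤ ·) (insert (some none : M.PFace) C) :=
      hC.1.insert (fun y _ _ => Or.inr (ple_top y))
    have h3 := hC.2 hchain (Set.subset_insert _ _)
    rw [h3]; exact Set.mem_insert _ _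
  have hinj : ∀ x ∈ C, ∀ y ∈ C, M.prank x = M.prank y → x = y := by
    intro x hx y hy hr
    by_contra hne
    rcases hC.1 hx hy hne with h | h
    · exact hne (ple_rank_eq h hr)
    · exact (Ne.symm hne) (ple_rank_eq h hr.symm)
  have hfin : C.Finite := by
    have hio : Set.InjOn M.prank C := fun x hx y hy h => hinj x hx y hy h
    have himg : (M.prank '' C).Finite := (Set.finite_Icc (-1 : ℤ) (n : ℤ)).subset
      (by rintro _ ⟨x, _, rfl⟩; exact ⟨prank_lb x, prank_ub x⟩)
    exact Set.Finite.of_finite_image himg hio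
  rcases eq_or_lt_of_le h1 with hm1 | hm1
  · exact ⟨none, ⟨hbotmem, by simp only [prank]; omega⟩,
      fun y hy => hinj y hy.1 none hbotmem (by rw [hy.2]; simp only [prank]; omega)⟩
  rcases eq_or_lt_of_le h2 with hm2 | hm2
  · exact ⟨some none, ⟨htopmem, by simp only [prank]; omega⟩,
      fun y hy => hinj y hy.1 (some none) htopmem (by rw [hy.2]; simp only [prank]; omega)⟩
  have hex : ∃ x ∈ C, M.prank x = m := by
    by_contra hno
    push_neg at hno
    have hAne : (none : M.PFace) ∈ {x ∈ C | M.prank x < m} :=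
      ⟨hbotmem, by simp only [prank]; omega⟩
    have hBne : (some none : M.PFace) ∈ {x ∈ C | m < M.prank x} :=
      ⟨htopmem, by simp only [prank]; omega⟩
    obtain ⟨F₁, hF1, hmax1⟩ : ∃ a ∈ {x ∈ C | M.prank x < m},
        ∀ a' ∈ {x ∈ C | M.prank x < m}, a ≤ a' → a = a' := by
      obtain ⟨a, ha, hm⟩ := Set.Finite.exists_maximalFor id {x ∈ C | M.prank x < m}
        (hfin.subset (Set.sep_subset _ _)) ⟨_, hAne⟩
      exact ⟨a, ha, fun b hb hab => le_antisymm hab (hm hb hab)⟩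
    obtain ⟨F₂, hF2, hmin2⟩ : ∃ a ∈ {x ∈ C | m < M.prank x},
        ∀ a' ∈ {x ∈ C | m < M.prank x}, a' ≤ a → a = a' := by
      obtain ⟨a, ha, hm⟩ := Set.Finite.exists_minimalFor id {x ∈ C | m < M.prank x}
        (hfin.subset (Set.sep_subset _ _)) ⟨_, hBne⟩
      exact ⟨a, ha, fun b hb hab => le_antisymm (hm hb hab) hab⟩
    have hr1 : M.prank F₁ < m := hF1.2
    have hr2 : m < M.prank F₂ := hF2.2
    have hle12 : F₁ ≤ F₂ := by
      have hne : F₁ ≠ F₂ := fun h => by rw [h] at hr1; omega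
      rcases hC.1 hF1.1 hF2.1 hne with h | h
      · exact h
      · exfalso
        have h4 : M.prank F₂ ≤ M.prank F₁ := ple_rank_le h
        omega
    have hmn : m.toNat < n := by omega
    set mFin : Fin n := ⟨m.toNat, hmn⟩ with hmdef
    have hmval : ((mFin : ℕ) : ℤ) = m := by simp only [hmdef]; omega
    obtain ⟨G, hG1, hG2, hGr⟩ :
        ∃ G : M.PFace, F₁ ≤ G ∧ G ≤ F₂ ∧ M.prank G = m := by
      rcases F₁ with _ | (_ | Fx) <;> rcases F₂ with _ | (_ | Fz)
      · exfalso; simp only [prank] at hr2; omega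
      · obtain ⟨v⟩ := M.nonempty
        exact ⟨some (some ⟨(mFin, M.face mFin v), isFace_face mFin v⟩),
          ple_none _, ple_top _, by simp only [prank]; omega⟩
      · obtain ⟨v, hv⟩ := Fz.2.nonempty
        refine ⟨some (some ⟨(mFin, M.face mFin v), isFace_face mFin v⟩),
          ple_none _, ?_, by simp only [prank]; omega⟩
        refine ⟨?_, v, mem_face_self mFin v, hv⟩
        simp only [prank] at hr2
        simp only [Fin.le_def, hmdef]
        omega
      · exfalso; simp only [prank] at hr2; omega
      · exfalso; simp only [prank] at hr1; omega
      · exfalso; simp only [prank] at hr1; omega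
      · exfalso; simp only [prank] at hr2; omega
      · obtain ⟨v, hv⟩ := Fx.2.nonempty
        refine ⟨some (some ⟨(mFin, M.face mFin v), isFace_face mFin v⟩),
          ?_, ple_top _, by simp only [prank]; omega⟩
        refine ⟨?_, v, hv, mem_face_self mFin v⟩
        simp only [prank] at hr1
        simp only [Fin.le_def, hmdef]
        omega
      · obtain ⟨hrk, v, hv1, hv2⟩ := hle12
        refine ⟨some (some ⟨(mFin, M.face mFin v), isFace_face mFin v⟩),
          ⟨?_, v, hv1, mem_face_self mFin v⟩, ⟨?_, v, mem_face_self mFin v, hv2⟩,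
          by simp only [prank]; omega⟩
        · simp only [prank] at hr1
          simp only [Fin.le_def, hmdef]
          omega
        · simp only [prank] at hr2
          simp only [Fin.le_def, hmdef]
          omega
    have hcomp : ∀ x ∈ C, x ≤ G ∨ G ≤ x := by
      intro x hx
      rcases lt_trichotomy (M.prank x) m with h | h | h
      · left
        refine le_trans ?_ hG1
        rcases eq_or_ne x F₁ with rfl | hne
        · exact le_refl x
        · rcases hC.1 hx hF1.1 hne with h' | h'
          · exact h'
          · exact le_of_eq (hmax1 x ⟨hx, h⟩ h').symm
      · exact absurd h (hno x hx)
      · right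
        refine le_trans hG2 ?_
        rcases eq_or_ne x F₂ with rfl | hne
        · exact le_refl x
        · rcases hC.1 hx hF2.1 hne with h' | h'
          · exact le_of_eq (hmin2 x ⟨hx, h⟩ h')
          · exact h'
    have hchain2 : IsChain (· ≤ ·) (insert G C) :=
      hC.1.insert (fun b hb _ => (hcomp b hb).symm)
    have hCeq := hC.2 hchain2 (Set.subset_insert _ _)
    have hGC : G ∈ C := by rw [hCeq]; exact Set.mem_insert _ _
    exact hno G hGC hGr
  obtain ⟨x₀, hx₀C, hx₀r⟩ := hex
  exact ⟨x₀, ⟨hx₀C, hx₀r⟩, fun y hy => hinj y hy.1 x₀ hx₀C (by rw [hy.2, hx₀r])⟩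

end Maniplex

namespace Maniplex

variable {n : ℕ} {V : Type} {M : Maniplex n V}

/-- The flag of `P_M` associated with a vertex. -/
def chainOf (M : Maniplex n V) (v : V) : Fin (n + 2) → M.PFace := fun m =>
  if h0 : (m : ℕ) = 0 then none
  else if h1 : (m : ℕ) = n + 1 then some none
  else
    let c : Fin n := ⟨(m : ℕ) - 1, by have := m.isLt; omega⟩
    some (some ⟨(c, M.face c v), isFace_face c v⟩)

theorem chainOf_bot {v : V} {m : Fin (n + 2)} (h0 : (m : ℕ) = 0) :
    M.chainOf v m = none := by simp [chainOf, h0]; rfl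

theorem chainOf_topf {v : V} {m : Fin (n + 2)} (h1 : (m : ℕ) = n + 1) :
    M.chainOf v m = some none := by
  simp [chainOf, h1]; rfl

theorem chainOf_mid {v : V} {m : Fin (n + 2)} (h0 : (m : ℕ) ≠ 0) (h1 : (m : ℕ) ≠ n + 1)
    (c : Fin n) (hc : (c : ℕ) = (m : ℕ) - 1) :
    M.chainOf v m = some (some ⟨(c, M.face c v), isFace_face c v⟩) := by
  have hc' : (⟨(m : ℕ) - 1, by have := m.isLt; omega⟩ : Fin n) = c := Fin.ext hc.symm
  simp only [chainOf, h0, h1, ↓reduceDIte]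
  exact congrArg _ (congrArg _ (faceT_ext hc' (congrArg (fun d => M.face d v) hc')))

theorem prank_chainOf (v : V) (m : Fin (n + 2)) :
    M.prank (M.chainOf v m) = ((m : ℕ) : ℤ) - 1 := by
  by_cases h0 : (m : ℕ) = 0
  · rw [chainOf_bot h0]; simp only [prank]; omega
  by_cases h1 : (m : ℕ) = n + 1
  · rw [chainOf_topf h1]; simp only [prank]; omega
  · have hm := m.isLt
    rw [chainOf_mid h0 h1 ⟨(m : ℕ) - 1, by omega⟩ rfl]
    simp only [prank]
    omega

theorem chainOf_ranked (v : V) : IsRankedChain n M.prank (M.chainOf v) := by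
  refine ⟨?_, prank_chainOf v⟩
  intro m m' hlt
  have hlt' : (m : ℕ) < (m' : ℕ) := hlt
  have hne : M.chainOf v m ≠ M.chainOf v m' := by
    intro h
    have h2 := prank_chainOf (M := M) v m
    rw [h, prank_chainOf] at h2
    omega
  refine lt_of_le_of_ne ?_ hne
  by_cases h0 : (m : ℕ) = 0
  · rw [chainOf_bot h0]; exact ple_none _
  by_cases h1 : (m' : ℕ) = n + 1
  · rw [chainOf_topf h1]; exact ple_top _
  · have hm := m.isLt
    have hm' := m'.isLt
    rw [chainOf_mid h0 (by omega) ⟨(m : ℕ) - 1, by omega⟩ rfl,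
      chainOf_mid (by omega) h1 ⟨(m' : ℕ) - 1, by omega⟩ rfl]
    exact ⟨Fin.mk_le_mk.mpr (by omega), v, mem_face_self _ v, mem_face_self _ v⟩

theorem chainOf_mid_inj {u v : V} {m : Fin (n + 2)} (h0 : (m : ℕ) ≠ 0)
    (h1 : (m : ℕ) ≠ n + 1) (c : Fin n) (hc : (c : ℕ) = (m : ℕ) - 1)
    (h : M.chainOf u m = M.chainOf v m) : M.face c u = M.face c v := by
  rw [chainOf_mid h0 h1 c hc, chainOf_mid h0 h1 c hc] at h
  have h2 : (⟨(c, M.face c u), isFace_face c u⟩ : M.FaceT) = ⟨(c, M.face c v), isFace_face c v⟩ :=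
    Option.some_injective _ (Option.some_injective _ h)
  exact congrArg (fun F : M.FaceT => F.1.2) h2

theorem chainOf_mid_eq {u v : V} {m : Fin (n + 2)} (h0 : (m : ℕ) ≠ 0)
    (h1 : (m : ℕ) ≠ n + 1) (c : Fin n) (hc : (c : ℕ) = (m : ℕ) - 1)
    (h : M.face c u = M.face c v) : M.chainOf u m = M.chainOf v m := by
  rw [chainOf_mid h0 h1 c hc, chainOf_mid h0 h1 c hc]
  exact congrArg _ (congrArg _ (faceT_ext rfl h))

theorem chainOf_inj (hW : M.WPIP) {u v : V} (h : M.chainOf u = M.chainOf v) : u = v := by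
  refine eq_of_reach_all hW (fun c => ?_)
  have hval : ((c.succ.castSucc : Fin (n + 2)) : ℕ) = (c : ℕ) + 1 := rfl
  have h2 := chainOf_mid_inj (m := c.succ.castSucc) (by omega) (by have := c.isLt; omega)
    c (by omega) (congrFun h _)
  have h3 : v ∈ M.face c u := h2 ▸ mem_face_self c v
  exact h3

/-- F3: common vertex of an incident chain of faces. -/
theorem common_vertex {S : Fin n → Set V} (hS : ∀ c, M.IsFace c (S c))
    (hcons : ∀ c c' : Fin n, (c : ℕ) + 1 = (c' : ℕ) → (S c ∩ S c').Nonempty) :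
    ∃ v, ∀ c, v ∈ S c := by
  have key : ∀ k : ℕ, k ≤ n → ∃ v, ∀ c : Fin n, (c : ℕ) < k → v ∈ S c := by
    intro k
    induction k with
    | zero =>
      intro _
      obtain ⟨v⟩ := M.nonempty
      exact ⟨v, fun c hc => absurd hc (by omega)⟩
    | succ k ih =>
      intro hk1
      rcases Nat.eq_zero_or_pos k with rfl | hkpos
      · have h0 : 0 < n := hk1
        obtain ⟨v, hv⟩ := (hS ⟨0, h0⟩).nonempty
        refine ⟨v, fun c hc => ?_⟩
        have hc0 : c = ⟨0, h0⟩ := Fin.ext (by show (c : ℕ) = 0; omega)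
        rwa [hc0]
      · obtain ⟨v, hv⟩ := ih (by omega)
        obtain ⟨ck1, hck1⟩ : ∃ c : Fin n, (c : ℕ) = k - 1 := ⟨⟨k - 1, by omega⟩, rfl⟩
        obtain ⟨ck, hck⟩ : ∃ c : Fin n, (c : ℕ) = k := ⟨⟨k, by omega⟩, rfl⟩
        obtain ⟨w, hw1, hw2⟩ := hcons ck1 ck (by omega)
        have hreach : M.ReachIn {c | c ≠ ck1} v w := by
          have h3 := hw1
          rw [(hS ck1).face_eq (hv ck1 (by omega))] at h3
          exact h3
        obtain ⟨x, hx1, hx2⟩ := sort_ne' ck1 hreach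
        refine ⟨x, fun c hc => ?_⟩
        rcases Nat.lt_or_ge (c : ℕ) k with hck' | hck'
        · rw [(hS c).face_eq (hv c hck')]
          refine reach_mono (fun c' hc' => ?_) hx1
          simp only [Set.mem_setOf_eq, Fin.lt_def, ne_eq, ← Fin.val_eq_val, hck1] at hc' ⊢
          omega
        · have hcck : c = ck := Fin.ext (by omega)
          rw [hcck, (hS ck).face_eq hw2]
          refine reach_mono (fun c' hc' => ?_) (reach_symm hx2)
          simp only [Set.mem_setOf_eq, Fin.lt_def, ne_eq, ← Fin.val_eq_val, hck1, hck] at hc' ⊢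
          omega
  obtain ⟨v, hv⟩ := key n le_rfl
  exact ⟨v, fun c => hv c c.isLt⟩

theorem chain_eq_chainOf {f : Fin (n + 2) → M.PFace} (hf : IsRankedChain n M.prank f) :
    ∃ v, M.chainOf v = f := by
  classical
  have hdec : ∀ c : Fin n, ∃ Fc : M.FaceT,
      f c.succ.castSucc = some (some Fc) ∧ ((Fc.1.1 : ℕ)) = (c : ℕ) := by
    intro c
    have hval : ((c.succ.castSucc : Fin (n + 2)) : ℕ) = (c : ℕ) + 1 := rfl
    obtain ⟨Fc, hFc, hv⟩ := proper_of_prank (x := f c.succ.castSucc) c.isLt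
      (by rw [hf.2]; omega)
    exact ⟨Fc, hFc, hv⟩
  choose F hF1 hF2 using hdec
  have hSface : ∀ c : Fin n, M.IsFace c (F c).1.2 := by
    intro c
    have h3 := (F c).2
    rwa [show (F c).1.1 = c from Fin.ext (hF2 c)] at h3
  have hcons : ∀ c c' : Fin n, (c : ℕ) + 1 = (c' : ℕ) → ((F c).1.2 ∩ (F c').1.2).Nonempty := by
    intro c c' hcc
    have hlt : (c.succ.castSucc : Fin (n + 2)) < c'.succ.castSucc := by
      simp only [Fin.lt_def]
      show (c : ℕ) + 1 < (c' : ℕ) + 1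
      omega
    have hmono := hf.1 hlt
    have hple : M.ple (f c.succ.castSucc) (f c'.succ.castSucc) := le_of_lt hmono
    rw [hF1 c, hF1 c'] at hple
    exact hple.2
  obtain ⟨v, hv⟩ := common_vertex hSface hcons
  refine ⟨v, funext fun m => ?_⟩
  by_cases h0 : (m : ℕ) = 0
  · rw [chainOf_bot h0]
    exact (eq_none_of_prank (by rw [hf.2]; omega)).symm
  by_cases h1 : (m : ℕ) = n + 1
  · rw [chainOf_topf h1]
    exact (eq_topf_of_prank (by rw [hf.2]; omega)).symm
  · have hm := m.isLt
    obtain ⟨c, hc⟩ : ∃ c : Fin n, (c : ℕ) = (m : ℕ) - 1 := ⟨⟨(m : ℕ) - 1, by omega⟩, rfl⟩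
    have hmc : m = c.succ.castSucc := Fin.ext (by
      have hval : ((c.succ.castSucc : Fin (n + 2)) : ℕ) = (c : ℕ) + 1 := rfl
      omega)
    rw [chainOf_mid h0 h1 c hc, hmc, hF1 c]
    refine congrArg _ (congrArg _ (faceT_ext (Fin.ext (hF2 c)).symm ?_))
    exact ((hSface c).face_eq (hv c)).symm

end Maniplex

namespace Maniplex

variable {n : ℕ} {V : Type} {M : Maniplex n V}

theorem succ_castSucc_val (d : Fin n) : ((d.succ.castSucc : Fin (n + 2)) : ℕ) = (d : ℕ) + 1 := rfl

theorem chainOf_adj (hW : M.WPIP) (d : Fin n) (x : V) :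
    M.chainOf x d.succ.castSucc ≠ M.chainOf (M.σ d x) d.succ.castSucc ∧
      ∀ l, l ≠ d.succ.castSucc → M.chainOf x l = M.chainOf (M.σ d x) l := by
  have hd := d.isLt
  constructor
  · intro h
    exact face_ne hW d x
      (chainOf_mid_inj (by rw [succ_castSucc_val]; omega) (by rw [succ_castSucc_val]; omega) d
        (by rw [succ_castSucc_val]; omega) h)
  · intro l hl
    by_cases h0 : (l : ℕ) = 0
    · rw [chainOf_bot h0, chainOf_bot h0]
    by_cases h1 : (l : ℕ) = n + 1
    · rw [chainOf_topf h1, chainOf_topf h1]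
    · have hll := l.isLt
      obtain ⟨c, hc⟩ : ∃ c : Fin n, (c : ℕ) = (l : ℕ) - 1 := ⟨⟨(l : ℕ) - 1, by omega⟩, rfl⟩
      have hcd : d ≠ c := by
        intro h
        apply hl
        apply Fin.ext
        rw [succ_castSucc_val]
        subst h
        omega
      exact chainOf_mid_eq h0 h1 c hc (face_eq_of_mem (sigma_mem_face hcd x))
  
theorem psfc (hW : M.WPIP) (Φ Ψ : Fin (n + 2) → M.PFace)
    (hΦ : IsRankedChain n M.prank Φ) (hΨ : IsRankedChain n M.prank Ψ) :
    Relation.ReflTransGen (fun X Y => IsRankedChain n M.prank Y ∧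
      (∃ j, X j ≠ Y j ∧ ∀ l, l ≠ j → X l = Y l) ∧
      ∀ m, Φ m = Ψ m → Y m = Φ m) Φ Ψ := by
  classical
  obtain ⟨u, rfl⟩ := chain_eq_chainOf hΦ
  obtain ⟨v, rfl⟩ := chain_eq_chainOf hΨ
  have hKreach : ∀ c ∈ Finset.univ.filter (fun c : Fin n => M.face c u = M.face c v),
      M.ReachIn {x | x ≠ c} u v := by
    intro c hc
    rw [Finset.mem_filter] at hc
    have h3 : v ∈ M.face c u := by rw [hc.2]; exact mem_face_self c v
    exact h3
  have hpath := reach_avoid hW _ hKreach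
  have main : ∀ w, M.ReachIn {c | c ∉ Finset.univ.filter
        (fun c : Fin n => M.face c u = M.face c v)} w v →
      (∀ c : Fin n, M.face c u = M.face c v → M.face c w = M.face c u) →
      Relation.ReflTransGen (fun X Y => IsRankedChain n M.prank Y ∧
        (∃ j, X j ≠ Y j ∧ ∀ l, l ≠ j → X l = Y l) ∧
        ∀ m, M.chainOf u m = M.chainOf v m → Y m = M.chainOf u m)
        (M.chainOf w) (M.chainOf v) := by
    intro w hw
    induction hw using Relation.ReflTransGen.head_induction_on with
    | refl => intro _; exact Relation.ReflTransGen.refl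
    | head hstep htail ih =>
      rename_i x y
      obtain ⟨d, hdK, rfl⟩ := hstep
      intro hinv
      simp only [Set.mem_setOf_eq, Finset.mem_filter, Finset.mem_univ, true_and] at hdK
      have hinv' : ∀ c : Fin n, M.face c u = M.face c v → M.face c (M.σ d x) = M.face c u := by
        intro c hc
        have hcd : d ≠ c := fun h => hdK (h ▸ hc)
        rw [← face_eq_of_mem (sigma_mem_face hcd x)]
        exact hinv c hc
      refine Relation.ReflTransGen.head ?_ (ih hinv')
      obtain ⟨hne, hoth⟩ := chainOf_adj hW d x
      refine ⟨chainOf_ranked _, ⟨d.succ.castSucc, hne, hoth⟩, ?_⟩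
      intro m hm
      by_cases h0 : (m : ℕ) = 0
      · rw [chainOf_bot h0, chainOf_bot h0]
      by_cases h1 : (m : ℕ) = n + 1
      · rw [chainOf_topf h1, chainOf_topf h1]
      · have hmm := m.isLt
        obtain ⟨c, hc⟩ : ∃ c : Fin n, (c : ℕ) = (m : ℕ) - 1 := ⟨⟨(m : ℕ) - 1, by omega⟩, rfl⟩
        have hcm := chainOf_mid_inj h0 h1 c hc hm
        exact chainOf_mid_eq h0 h1 c hc (hinv' c hcm)
  exact main u hpath (fun c _ => rfl)

/-- The abstract polytope associated with a maniplex satisfying the WPIP. -/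
def toAPolytope (M : Maniplex n V) (hW : M.WPIP) : APolytope n M.PFace where
  rk := M.prank
  bot := none
  top := some none
  bot_le := ple_none
  le_top := ple_top
  rk_bot := rfl
  rk_top := rfl
  rk_strictMono := prank_strictMono
  chain_full := pchain_full
  diamond := pdiamond hW
  sfc := psfc hW

theorem backward (hW : M.WPIP) :
    ∃ (P : Type) (inst : PartialOrder P) (AP : @APolytope n P inst)
      (β : V → @APolytope.Flag n P inst AP),
      Function.Bijective β ∧
      ∀ (v : V) (i : Fin n),
        @APolytope.FlagAdj n P inst AP i (β v) (β (M.σ i v)) := by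
  refine ⟨M.PFace, inferInstance, M.toAPolytope hW,
    fun v => ⟨M.chainOf v, chainOf_ranked v⟩, ⟨?_, ?_⟩, ?_⟩
  · intro u v h
    exact chainOf_inj hW (congrArg Subtype.val h)
  · rintro ⟨f, hf⟩
    obtain ⟨v, hv⟩ := chain_eq_chainOf hf
    exact ⟨v, Subtype.ext hv⟩
  · intro v d
    exact chainOf_adj hW d v

end Maniplex

namespace APolytope

variable {n : ℕ} {P : Type} [PartialOrder P] {AP : APolytope n P}

theorem flagAdj_unique {c : Fin n} {X Y Y' : AP.Flag}
    (h1 : AP.FlagAdj c X Y) (h2 : AP.FlagAdj c X Y') : Y = Y' := by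
  have hc2 := c.isLt
  set m : Fin (n + 2) := c.succ.castSucc with hmdef
  have hmv : (m : ℕ) = (c : ℕ) + 1 := rfl
  set m0 : Fin (n + 2) := ⟨(c : ℕ), by omega⟩ with hm0def
  set m2 : Fin (n + 2) := ⟨(c : ℕ) + 2, by omega⟩ with hm2def
  have hm0v : (m0 : ℕ) = (c : ℕ) := rfl
  have hm2v : (m2 : ℕ) = (c : ℕ) + 2 := rfl
  have hne0 : m0 ≠ m := by intro h; have := congrArg Fin.val h; omega
  have hne2 : m2 ≠ m := by intro h; have := congrArg Fin.val h; omega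
  have hlt0 : m0 < m := by rw [Fin.lt_def]; omega
  have hlt2 : m < m2 := by rw [Fin.lt_def]; omega
  have key : ∀ Z : AP.Flag, AP.FlagAdj c X Z →
      X.1 m0 ≤ Z.1 m ∧ Z.1 m ≤ X.1 m2 ∧ AP.rk (Z.1 m) = AP.rk (X.1 m0) + 1 := by
    intro Z hZ
    have e0 : X.1 m0 = Z.1 m0 := hZ.2 m0 hne0
    have e2 : X.1 m2 = Z.1 m2 := hZ.2 m2 hne2
    refine ⟨?_, ?_, ?_⟩
    · rw [e0]; exact le_of_lt (Z.2.1 hlt0)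
    · rw [e2]; exact le_of_lt (Z.2.1 hlt2)
    · rw [Z.2.2 m, X.2.2 m0]; omega
  have hxz : X.1 m0 ≤ X.1 m2 := le_of_lt (X.2.1 (lt_trans hlt0 hlt2))
  have hrk : AP.rk (X.1 m2) = AP.rk (X.1 m0) + 2 := by
    rw [X.2.2 m2, X.2.2 m0]; omega
  obtain ⟨y₁, y₂, hyne, hiff⟩ := AP.diamond _ _ hxz hrk
  have hX := (hiff (X.1 m)).mp ⟨le_of_lt (X.2.1 hlt0), le_of_lt (X.2.1 hlt2),
    by rw [X.2.2 m, X.2.2 m0]; omega⟩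
  have hY := (hiff (Y.1 m)).mp (key Y h1)
  have hY' := (hiff (Y'.1 m)).mp (key Y' h2)
  have hYm : Y.1 m = Y'.1 m := by
    rcases hY with h | h <;> rcases hY' with h' | h'
    · rw [h, h']
    · rcases hX with hx | hx
      · exact absurd (hx.trans h.symm) h1.1
      · exact absurd (hx.trans h'.symm) h2.1
    · rcases hX with hx | hx
      · exact absurd (hx.trans h'.symm) h2.1
      · exact absurd (hx.trans h.symm) h1.1
    · rw [h, h']
  refine Subtype.ext (funext fun l => ?_)
  by_cases hl : l = m
  · rw [hl]; exact hYm
  · rw [← h1.2 l hl, h2.2 l hl]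

end APolytope

theorem maniplex_forward {n : ℕ} {V : Type} (M : Maniplex n V) {P : Type}
    [inst : PartialOrder P] (AP : APolytope n P) (β : V → AP.Flag)
    (hbij : Function.Bijective β)
    (hadj : ∀ (v : V) (i : Fin n), AP.FlagAdj i (β v) (β (M.σ i v))) : M.WPIP := by
  intro i j hij u v h1 h2
  have hij' : (i : ℕ) < (j : ℕ) := hij
  have hjn := j.isLt
  have transfer : ∀ (A : Set (Fin n)) (x y : V), M.ReachIn A x y →
      ∀ m : Fin (n + 2), (∀ c ∈ A, (m : ℕ) ≠ (c : ℕ) + 1) → (β x).1 m = (β y).1 m := by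
    intro A x y h m hm
    induction h with
    | refl => rfl
    | tail hxy hs ih =>
      obtain ⟨c, hcA, rfl⟩ := hs
      rw [ih]
      exact (hadj _ c).2 m (fun he => hm c hcA (by rw [he]; rfl))
  have hag : ∀ m : Fin (n + 2), ((m : ℕ) ≤ (i : ℕ) + 1 ∨ (j : ℕ) + 1 ≤ (m : ℕ)) →
      (β u).1 m = (β v).1 m := by
    intro m hm
    rcases hm with hm | hm
    · exact transfer _ u v h1 m (fun c hc => by
        simp only [Set.mem_setOf_eq, Fin.lt_def] at hc; omega)
    · exact transfer _ u v h2 m (fun c hc => by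
        simp only [Set.mem_setOf_eq, Fin.lt_def] at hc; omega)
  have hsfc := AP.sfc (β u).1 (β v).1 (β u).2 (β v).2
  have main : ∀ g, Relation.ReflTransGen
      (fun X Y => IsRankedChain n AP.rk Y ∧
        (∃ j', X j' ≠ Y j' ∧ ∀ l, l ≠ j' → X l = Y l) ∧
        ∀ m, (β u).1 m = (β v).1 m → Y m = (β u).1 m) (β u).1 g →
      ∃ w, M.ReachIn {c | i < c ∧ c < j} u w ∧ (β w).1 = g ∧
        ∀ m, (β u).1 m = (β v).1 m → g m = (β u).1 m := by
    intro g hg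
    induction hg with
    | refl => exact ⟨u, Maniplex.reach_refl _ u, rfl, fun m _ => rfl⟩
    | tail hg hstep ih =>
      rename_i g g'
      obtain ⟨w, hw, hwg, hinv⟩ := ih
      obtain ⟨hrank', ⟨m₀, hm₀ne, hm₀eq⟩, hpres⟩ := hstep
      have hm₀ : (i : ℕ) + 1 < (m₀ : ℕ) ∧ (m₀ : ℕ) < (j : ℕ) + 1 := by
        by_contra hcon
        have hcommon : (β u).1 m₀ = (β v).1 m₀ := hag m₀ (by omega)
        exact hm₀ne ((hinv m₀ hcommon).trans (hpres m₀ hcommon).symm)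
      obtain ⟨c, hcv⟩ : ∃ c : Fin n, (c : ℕ) = (m₀ : ℕ) - 1 := ⟨⟨(m₀ : ℕ) - 1, by omega⟩, rfl⟩
      have hcm : c.succ.castSucc = m₀ := by
        apply Fin.ext
        show (c : ℕ) + 1 = (m₀ : ℕ)
        omega
      have hadj1 : AP.FlagAdj c (β w) ⟨g', hrank'⟩ := by
        constructor
        · rw [hcm]
          show (β w).1 m₀ ≠ g' m₀
          rw [hwg]
          exact hm₀ne
        · intro l hl
          show (β w).1 l = g' l
          rw [hwg]
          exact hm₀eq l (by rwa [hcm] at hl)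
      have heq : β (M.σ c w) = ⟨g', hrank'⟩ := APolytope.flagAdj_unique (hadj w c) hadj1
      refine ⟨M.σ c w, ?_, ?_, hpres⟩
      · refine hw.tail ⟨c, ?_, rfl⟩
        simp only [Set.mem_setOf_eq, Fin.lt_def]
        omega
      · rw [heq]
  obtain ⟨w, hw, hwv, -⟩ := main (β v).1 hsfc
  have hwveq : w = v := hbij.1 (Subtype.ext hwv)
  rw [hwveq] at hw
  exact hw

/-- A maniplex is polytopal (isomorphic, as an edge-coloured graph, to the flag
graph of an abstract polytope) if and only if it satisfies the (weak) path
intersection property. -/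
theorem polytopal_iff_wpip {n : ℕ} {V : Type} (M : Maniplex n V) :
    (∃ (P : Type) (inst : PartialOrder P) (AP : @APolytope n P inst)
        (β : V → @APolytope.Flag n P inst AP),
        Function.Bijective β ∧
        ∀ (v : V) (i : Fin n),
          @APolytope.FlagAdj n P inst AP i (β v) (β (M.σ i v))) ↔
      M.WPIP := by
  constructor
  · rintro ⟨P, inst, AP, β, hbij, hadj⟩
    exact maniplex_forward M AP β hbij hadj
  · exact fun hW => Maniplex.backward hW
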